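/- Let n be an integer greater than 2, k an integer greater than 1, and x a positive odd integer with gcd(k, x) = 1 and x² < 4k^n. Write x² - 4k^n = a²d with a a positive integer and d a squarefree integer less than -3. If k^n < (1 - d)²/16, then n divides h(d). -/

import Mathlib

open Polynomial

section Toolkit

variable {K : Type} [Field K] [NumberField K] {α : K} {d : ℤ}

theorem cast_inj' {p q : ℚ} (h : ((p : K)) = (q : K)) : p = q := by
  have : algebraMap ℚ K p = algebraMap ℚ K q := by
    simpa [Algebra.algebraMap_eq_smul_one, Rat.smul_one_eq_cast] using h
  exact (algebraMap ℚ K).injective this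

theorem quad_li (hα : α ^ 2 = (d : K)) (hd0 : d < 0) :
    LinearIndependent ℚ ![(1 : K), α] := by
  rw [linearIndependent_fin2]
  refine ⟨?_, ?_⟩
  · show α ≠ 0
    intro h
    rw [h] at hα
    have : ((d:ℚ) : K) = ((0:ℚ) : K) := by push_cast; rw [← hα]; simp
    have := cast_inj' this
    simp at this; omega
  · intro c
    show c • α ≠ 1
    intro h
    replace h := h.symm
    have hc : c ≠ 0 := by rintro rfl; simp at h
    have hα' : α = ((c⁻¹ : ℚ) : K) := by
      rw [Algebra.smul_def] at h
      have hcK : ((c:ℚ):K) ≠ 0 := by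
        intro h0
        exact hc (by simpa using cast_inj' (h0.trans (by push_cast; rfl) : ((c:ℚ):K) = ((0:ℚ):K)))
      field_simp
      rw [Rat.cast_div, Rat.cast_one, eq_div_iff hcK, mul_comm]
      simpa [Algebra.algebraMap_eq_smul_one, Rat.smul_one_eq_cast] using h.symm
    rw [hα'] at hα
    have : ((c⁻¹^2 : ℚ) : K) = ((d : ℚ) : K) := by push_cast; rw [← hα]; norm_cast
    have hdq := cast_inj' this
    have : (0:ℚ) < c⁻¹ ^ 2 := by positivity
    have : (d : ℚ) < 0 := by exact_mod_cast hd0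
    nlinarith

variable (hα : α ^ 2 = (d : K)) (hd0 : d < 0) (hrank : Module.finrank ℚ K = 2)

noncomputable def quadBasis : Module.Basis (Fin 2) ℚ K :=
  basisOfLinearIndependentOfCardEqFinrank (quad_li hα hd0) (by simp [hrank])

theorem quadBasis_zero : quadBasis hα hd0 hrank 0 = 1 := by
  unfold quadBasis
  rw [coe_basisOfLinearIndependentOfCardEqFinrank]; rfl

theorem quadBasis_one : quadBasis hα hd0 hrank 1 = α := by
  unfold quadBasis
  rw [coe_basisOfLinearIndependentOfCardEqFinrank]; rfl

theorem quad_decomp (z : K) :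
    z = ((quadBasis hα hd0 hrank).repr z 0 : ℚ) • (1:K)
      + ((quadBasis hα hd0 hrank).repr z 1 : ℚ) • α := by
  have := (quadBasis hα hd0 hrank).sum_repr z
  rw [Fin.sum_univ_two, quadBasis_zero, quadBasis_one] at this
  exact this.symm

theorem quad_coords (p q : ℚ) :
    (quadBasis hα hd0 hrank).repr (p • (1:K) + q • α) 0 = p ∧
    (quadBasis hα hd0 hrank).repr (p • (1:K) + q • α) 1 = q := by
  set b := quadBasis hα hd0 hrank with hb
  have h0 : (1:K) = b 0 := (quadBasis_zero hα hd0 hrank).symm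
  have h1 : α = b 1 := (quadBasis_one hα hd0 hrank).symm
  rw [h0, h1]
  simp [Finsupp.single_apply]


theorem rsmul_one (r : ℚ) : r • (1:K) = (r : K) := Rat.smul_one_eq_cast K r
theorem rsmul (r : ℚ) (z : K) : r • z = (r:K) * z := by
  rw [show r • z = r • ((1:K) * z) by rw [one_mul], ← smul_mul_assoc, rsmul_one]

include hα in
theorem quad_mul (p q r s : ℚ) : ((p:K) + q*α) * ((r:K)+s*α)
    = ((p*r + d*q*s : ℚ) : K) + ((p*s+q*r : ℚ) : K) * α := by
  push_cast
  linear_combination (q:K)*(s:K)*hα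

noncomputable def Pc (z : K) : ℚ := (quadBasis hα hd0 hrank).repr z 0
noncomputable def Qc (z : K) : ℚ := (quadBasis hα hd0 hrank).repr z 1

theorem quad_decomp' (z : K) :
    z = ((Pc hα hd0 hrank z : ℚ) : K) + ((Qc hα hd0 hrank z : ℚ) : K) * α := by
  have h := quad_decomp hα hd0 hrank z
  rwa [rsmul_one, rsmul] at h

theorem Pc_spec (p q : ℚ) : Pc hα hd0 hrank ((p:K) + (q:K) * α) = p := by
  have h := (quad_coords hα hd0 hrank p q).1
  rwa [rsmul_one, rsmul] at h

theorem Qc_spec (p q : ℚ) : Qc hα hd0 hrank ((p:K) + (q:K) * α) = q := by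
  have h := (quad_coords hα hd0 hrank p q).2
  rwa [rsmul_one, rsmul] at h

include hα in
theorem quad_mul_aux (z : K) : z * α =
    ((d * Qc hα hd0 hrank z : ℚ):K) + ((Pc hα hd0 hrank z : ℚ):K) * α := by
  set p := Pc hα hd0 hrank z with hp
  set q := Qc hα hd0 hrank z with hq
  rw [show z = ((p:ℚ):K) + ((q:ℚ):K) * α from quad_decomp' hα hd0 hrank z]
  push_cast
  linear_combination ((q : ℚ):K) * hα

theorem quad_norm (z : K) :
    Algebra.norm ℚ z = Pc hα hd0 hrank z ^ 2 - d * Qc hα hd0 hrank z ^ 2 := by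
  have hmul := quad_mul_aux hα hd0 hrank z
  rw [Algebra.norm_eq_matrix_det (quadBasis hα hd0 hrank), Matrix.det_fin_two]
  simp only [Algebra.leftMulMatrix_eq_repr_mul]
  rw [quadBasis_zero, quadBasis_one, mul_one]
  have e2 : (quadBasis hα hd0 hrank).repr (z * α) 0 = d * Qc hα hd0 hrank z := by
    rw [hmul]; exact Pc_spec hα hd0 hrank _ _
  have e3 : (quadBasis hα hd0 hrank).repr (z * α) 1 = Pc hα hd0 hrank z := by
    rw [hmul]; exact Qc_spec hα hd0 hrank _ _
  rw [e2, e3]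
  show Pc hα hd0 hrank z * Pc hα hd0 hrank z - _ * Qc hα hd0 hrank z = _
  ring

theorem quad_trace (z : K) :
    Algebra.trace ℚ K z = 2 * Pc hα hd0 hrank z := by
  have hmul := quad_mul_aux hα hd0 hrank z
  rw [Algebra.trace_eq_matrix_trace (quadBasis hα hd0 hrank), Matrix.trace_fin_two]
  simp only [Algebra.leftMulMatrix_eq_repr_mul]
  rw [quadBasis_zero, quadBasis_one, mul_one]
  have e3 : (quadBasis hα hd0 hrank).repr (z * α) 1 = Pc hα hd0 hrank z := by
    rw [hmul]; exact Qc_spec hα hd0 hrank _ _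
  rw [e3]
  show Pc hα hd0 hrank z + Pc hα hd0 hrank z = _
  ring


theorem sqfree_den_one (hd : Squarefree d) (r : ℚ) (m : ℤ)
    (h : (d:ℚ) * r ^ 2 = (m:ℚ)) : ∃ v : ℤ, (v:ℚ) = r := by
  have hde : ((r.den:ℚ)) ≠ 0 := by exact_mod_cast r.den_ne_zero
  have key : (d:ℚ) * (r.num:ℚ)^2 = (m:ℚ) * (r.den:ℚ)^2 := by
    have hr : (r:ℚ) = (r.num:ℚ)/(r.den:ℚ) := (Rat.num_div_den r).symm
    rw [hr] at h
    field_simp at h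
    linear_combination h
  have keyZ : d * r.num^2 = m * (r.den:ℤ)^2 := by exact_mod_cast key
  have hdvd : ((r.den:ℤ))^2 ∣ d * r.num^2 := ⟨m, by linarith⟩
  have cop : IsCoprime (r.num) ((r.den:ℤ)) := by
    rw [Int.isCoprime_iff_gcd_eq_one]
    exact r.reduced
  have cop2 : IsCoprime (((r.den:ℤ))^2) (r.num^2) := (cop.symm.pow)
  have hdvd2 : ((r.den:ℤ))^2 ∣ d := cop2.dvd_of_dvd_mul_right hdvd
  have hu : IsUnit ((r.den:ℤ)) := hd _ (by rwa [← pow_two])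
  have hden : r.den = 1 := by
    rcases Int.isUnit_iff.mp hu with h1 | h1
    · exact_mod_cast h1
    · have := r.pos; omega
  exact ⟨r.num, by rw [← Rat.num_div_den r, hden]; simp⟩

include hα hd0 hrank in
theorem quad_int {z : K} (hz : IsIntegral ℤ z) (hd : Squarefree d) :
    ∃ u v : ℤ, (u:ℚ) = 2 * Pc hα hd0 hrank z ∧ (v:ℚ) = 2 * Qc hα hd0 hrank z := by
  have htr : IsIntegral ℤ (Algebra.trace ℚ K z) := Algebra.isIntegral_trace hz
  have hnm : IsIntegral ℤ (Algebra.norm ℚ z) := Algebra.isIntegral_norm (R := ℤ) (K := ℚ) hz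
  obtain ⟨u, hu⟩ := IsIntegrallyClosed.isIntegral_iff.mp htr
  obtain ⟨m, hm⟩ := IsIntegrallyClosed.isIntegral_iff.mp hnm
  have hu' : (u:ℚ) = 2 * Pc hα hd0 hrank z := by
    rw [show ((u:ℤ):ℚ) = algebraMap ℤ ℚ u from rfl, hu, quad_trace]
  have hm' : (m:ℚ) = Pc hα hd0 hrank z ^ 2 - d * Qc hα hd0 hrank z ^ 2 := by
    rw [show ((m:ℤ):ℚ) = algebraMap ℤ ℚ m from rfl, hm, quad_norm]
  obtain ⟨v, hv⟩ := sqfree_den_one hd (2 * Qc hα hd0 hrank z) (u^2 - 4*m)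
    (by push_cast; linear_combination (-(u:ℚ) - 2*Pc hα hd0 hrank z)*hu' + 4*hm')
  exact ⟨u, v, hu', hv⟩


theorem rat_pow_inj {u v : ℚ} (hu : 0 ≤ u) (hv : 0 ≤ v) {t : ℕ} (ht : t ≠ 0)
    (h : u ^ t = v ^ t) : u = v := by
  rcases lt_trichotomy u v with hlt | he | hgt
  · have := pow_lt_pow_left₀ hlt hu ht; exact absurd h (by linarith)
  · exact he
  · have := pow_lt_pow_left₀ hgt hv ht; exact absurd h (by linarith)

include hα hd0 hrank in
set_option maxHeartbeats 1600000 in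
theorem endgame (hd : Squarefree d) (hd3 : d < -3) (hd4 : (4:ℤ) ∣ d - 1)
    (k x : ℕ) (a : ℤ) (n e t : ℕ) (hk : 1 < k) (ha : 0 < a) (hn0 : n ≠ 0)
    (he0 : e ≠ 0) (ht2 : 2 ≤ t) (het : e * t = n)
    (hgcd : Nat.gcd k x = 1)
    (hda : (x:ℤ)^2 - 4*(k:ℤ)^n = a^2*d)
    (hbound : ((k : ℚ)) ^ n < ((1 : ℚ) - (d : ℚ)) ^ 2 / 16)
    (γ wK wI : K) (hγint : IsIntegral ℤ γ) (hwint : IsIntegral ℤ wK)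
    (hwiint : IsIntegral ℤ wI) (hww : wK * wI = 1)
    (hβ : ((((x:ℚ)/2 : ℚ)):K) + ((((a:ℚ)/2 : ℚ)):K) * α = γ ^ t * wK) : False := by
  have hdq : (d : ℚ) < 0 := by exact_mod_cast hd0
  have hdaQ : (x:ℚ)^2 - 4*(k:ℚ)^n = (a:ℚ)^2 * (d:ℚ) := by exact_mod_cast hda
  set p₀ : ℚ := (x:ℚ)/2 with hp₀
  set q₀ : ℚ := (a:ℚ)/2 with hq₀
  set βK : K := ((p₀ : ℚ):K) + ((q₀ : ℚ):K) * α with hβK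
  -- norms are nonnegative
  have hnonneg : ∀ z : K, 0 ≤ Algebra.norm ℚ z := by
    intro z
    rw [quad_norm hα hd0 hrank]
    have h1 : 0 ≤ -(d:ℚ) * Qc hα hd0 hrank z ^ 2 := mul_nonneg (by linarith) (sq_nonneg _)
    nlinarith [sq_nonneg (Pc hα hd0 hrank z)]
  have hint_norm : ∀ z : K, IsIntegral ℤ z → ∃ m : ℤ, (m:ℚ) = Algebra.norm ℚ z := fun z hz =>
    IsIntegrallyClosed.isIntegral_iff.mp (Algebra.isIntegral_norm (R := ℤ) (K := ℚ) hz)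
  -- norm of the unit is 1
  have hNw : Algebra.norm ℚ wK = 1 := by
    obtain ⟨m1, hm1⟩ := hint_norm wK hwint
    obtain ⟨m2, hm2⟩ := hint_norm wI hwiint
    have hprodQ : (m1 : ℚ) * (m2 : ℚ) = 1 := by
      rw [hm1, hm2, ← map_mul, hww, map_one]
    have hprodZ : m1 * m2 = 1 := by exact_mod_cast hprodQ
    have hm1nn : 0 ≤ m1 := by
      have := hnonneg wK
      rw [← hm1] at this
      exact_mod_cast this
    have hm11 : m1 = 1 := by
      rcases Int.isUnit_iff.mp (IsUnit.of_mul_eq_one m2 hprodZ) with h | h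
      · exact h
      · omega
    rw [← hm1, hm11, Int.cast_one]
  -- coordinates of βK
  have hPβ : Pc hα hd0 hrank βK = p₀ := by rw [hβK]; exact Pc_spec hα hd0 hrank p₀ q₀
  have hQβ : Qc hα hd0 hrank βK = q₀ := by rw [hβK]; exact Qc_spec hα hd0 hrank p₀ q₀
  have hNβ : Algebra.norm ℚ βK = (k:ℚ)^n := by
    rw [quad_norm hα hd0 hrank, hPβ, hQβ, hp₀, hq₀]
    linear_combination (1/4) * hdaQ
  have hβeq : βK = γ ^ t * wK := hβ
  -- norm of γ
  have hNγt : Algebra.norm ℚ γ ^ t = (k:ℚ)^n := by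
    rw [← map_pow, ← hNβ, hβeq, map_mul, hNw, mul_one]
  have hNγ : Algebra.norm ℚ γ = (k:ℚ)^e := by
    refine rat_pow_inj (hnonneg γ) (by positivity) (by omega : t ≠ 0) ?_
    rw [hNγt, ← pow_mul, het]
  -- integer coordinates of γ
  obtain ⟨u, v, hu, hv⟩ := quad_int hα hd0 hrank hγint hd
  have hNγc := quad_norm hα hd0 hrank γ
  rw [hNγ] at hNγc
  have huvQ : (u:ℚ)^2 - (d:ℚ)*(v:ℚ)^2 = 4*(k:ℚ)^e := by
    linear_combination ((u:ℚ) + 2*Pc hα hd0 hrank γ) * hu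
      - (d:ℚ) * ((v:ℚ) + 2*Qc hα hd0 hrank γ) * hv - 4 * hNγc
  have huvZ : u^2 - d*v^2 = 4*(k:ℤ)^e := by exact_mod_cast huvQ
  rcases eq_or_ne v 0 with hv0 | hv0
  · -- v = 0 : γ is rational, and the unit is rational, so βK would be rational
    have hQγ : Qc hα hd0 hrank γ = 0 := by
      rw [hv0] at hv; push_cast at hv; linarith
    -- unit coordinates
    obtain ⟨u', v', hu', hv'⟩ := quad_int hα hd0 hrank hwint hd
    have hNwc := quad_norm hα hd0 hrank wK
    rw [hNw] at hNwc
    have huv'Q : (u':ℚ)^2 - (d:ℚ)*(v':ℚ)^2 = 4 := by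
      linear_combination ((u':ℚ) + 2*Pc hα hd0 hrank wK) * hu'
        - (d:ℚ) * ((v':ℚ) + 2*Qc hα hd0 hrank wK) * hv' - 4 * hNwc
    have huv'Z : u'^2 - d*v'^2 = 4 := by exact_mod_cast huv'Q
    have hv'0 : v' = 0 := by
      by_contra hne
      have h1 : 1 ≤ v'^2 := by rcases lt_or_gt_of_ne hne with h | h <;> nlinarith
      have h2 : d * v'^2 ≤ d := by nlinarith
      have h3 : u'^2 = 0 := by nlinarith [sq_nonneg u']
      have h4 : v'^2 = 1 := by nlinarith
      have h5 : d = -4 := by nlinarith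
      omega
    have hQw : Qc hα hd0 hrank wK = 0 := by
      rw [hv'0] at hv'; push_cast at hv'; linarith
    -- βK is rational: contradiction with q₀ ≠ 0
    obtain ⟨r1, hr1⟩ : ∃ r : ℚ, Pc hα hd0 hrank γ = r := ⟨_, rfl⟩
    obtain ⟨r2, hr2⟩ : ∃ r : ℚ, Pc hα hd0 hrank wK = r := ⟨_, rfl⟩
    have hγrat : γ = ((r1 : ℚ) : K) := by
      conv_lhs => rw [quad_decomp' hα hd0 hrank γ]
      rw [hQγ, hr1]; push_cast; ring
    have hwrat : wK = ((r2 : ℚ) : K) := by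
      conv_lhs => rw [quad_decomp' hα hd0 hrank wK]
      rw [hQw, hr2]; push_cast; ring
    have hβrat : βK = (((r1 ^ t * r2 : ℚ)) : K) + ((0:ℚ) : K) * α := by
      rw [hβeq, hγrat, hwrat]; push_cast; ring
    have : q₀ = 0 := by
      rw [← hQβ, hβrat, Qc_spec]
    rw [hq₀] at this
    have ha0 : (a:ℚ) ≠ 0 := by
      have : (0:ℚ) < (a:ℚ) := by exact_mod_cast ha
      linarith
    apply ha0
    linarith
  rcases eq_or_ne u 0 with hu0 | hu0
  · -- u = 0 : a prime dividing d divides both k and x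
    have hdv : -(d*v^2) = 4*(k:ℤ)^e := by rw [hu0] at huvZ; linarith
    obtain ⟨p, hp, hpd⟩ := Nat.exists_prime_and_dvd (n := d.natAbs) (by omega)
    have hpd' : (p:ℤ) ∣ d := by
      have h1 : (p:ℤ) ∣ (d.natAbs : ℤ) := Int.natCast_dvd_natCast.mpr hpd
      exact h1.trans (Int.natAbs_dvd.mpr dvd_rfl)
    have hp2 : p ≠ 2 := by
      intro h2
      rw [h2] at hpd'
      omega
    have hp4k : (p:ℤ) ∣ 4*(k:ℤ)^e := by
      have h1 : (p:ℤ) ∣ d * v^2 := hpd'.mul_right _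
      rw [show d*v^2 = -(4*(k:ℤ)^e) by linarith] at h1
      exact (dvd_neg.mp h1)
    have hp4kN : p ∣ 4*k^e := by
      have : (p:ℤ) ∣ ((4*k^e : ℕ) : ℤ) := by push_cast; exact hp4k
      exact_mod_cast this
    have hpk : p ∣ k := by
      have hnot4 : ¬ p ∣ 4 := by
        intro h4
        have h22 : p ∣ 2^2 := by norm_num; exact h4
        have : p ∣ 2 := hp.dvd_of_dvd_pow h22
        have := (Nat.prime_dvd_prime_iff_eq hp Nat.prime_two).mp this
        exact hp2 this
      have hcop : Nat.Coprime p 4 := (Nat.Prime.coprime_iff_not_dvd hp).mpr hnot4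
      have : p ∣ k^e := hcop.dvd_of_dvd_mul_left hp4kN
      exact hp.dvd_of_dvd_pow this
    have hpx : p ∣ x := by
      have h1 : (p:ℤ) ∣ (x:ℤ)^2 := by
        rw [show (x:ℤ)^2 = 4*(k:ℤ)^n + a^2*d by linarith]
        refine dvd_add ?_ (hpd'.mul_left _)
        exact Dvd.dvd.mul_left (Dvd.dvd.pow (Int.natCast_dvd_natCast.mpr hpk) hn0) 4
      have h2 : (p:ℤ) ∣ (x:ℤ) := (Int.prime_iff_natAbs_prime.mpr (by simpa using hp)).dvd_of_dvd_pow h1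
      exact_mod_cast h2
    have h1 : p ∣ 1 := hgcd ▸ Nat.dvd_gcd hpk hpx
    have h2 := Nat.le_of_dvd one_pos h1
    have := hp.two_le
    omega
  · -- u ≠ 0, v ≠ 0 : contradiction with the size bound
    have hu2 : 1 ≤ u^2 := by rcases lt_or_gt_of_ne hu0 with h | h <;> nlinarith
    have hv2 : 1 ≤ v^2 := by rcases lt_or_gt_of_ne hv0 with h | h <;> nlinarith
    have hdneg : 0 ≤ -d := by omega
    have h4ke : 1 - d ≤ 4*(k:ℤ)^e := by nlinarith [mul_le_mul_of_nonneg_left hv2 hdneg]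
    have h1d : (0:ℤ) ≤ 1 - d := by omega
    have hsq : (1-d)^2 ≤ (4*(k:ℤ)^e)^2 := by nlinarith
    have hk1 : (1:ℤ) ≤ (k:ℤ) := by exact_mod_cast hk.le
    have h2e : e*2 ≤ n := by
      have := Nat.mul_le_mul_left e ht2
      omega
    have hpow : (k:ℤ)^(e*2) ≤ (k:ℤ)^n := pow_le_pow_right₀ hk1 h2e
    have hps : (4*(k:ℤ)^e)^2 = 16*(k:ℤ)^(e*2) := by rw [pow_mul]; ring
    have hbZ : 16*(k:ℤ)^n < (1-d)^2 := by
      have h1 : 16*(k:ℚ)^n < ((1:ℚ)-(d:ℚ))^2 := by linarith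
      exact_mod_cast h1
    linarith

end Toolkit


theorem cop_le {R : Type} [CommRing R] {A B C : Ideal R}
    (h1 : A * B ≤ C) (h2 : B ⊔ C = ⊤) : A ≤ C := by
  calc A = A * (B ⊔ C) := by rw [h2, Ideal.mul_top]
  _ = A * B ⊔ A * C := Ideal.mul_sup ..
  _ ≤ C ⊔ C := sup_le_sup h1 Ideal.mul_le_right
  _ = C := sup_idem C

theorem span_pow_eq {R : Type} [CommRing R] [IsDedekindDomain R]
    (κ B C : R) (n : ℕ) (hn : n ≠ 0) (hBC : B * C = κ ^ n)
    (hκ : κ ≠ 0) (y z : R) (hyz : y * κ + z * (B + C) = 1) :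
    Ideal.span {κ, B} ^ n = Ideal.span {B} := by
  set I := Ideal.span {κ, B} with hI
  set J := Ideal.span {κ, C} with hJ
  have hκI : κ ∈ I := Ideal.subset_span (Set.mem_insert _ _)
  have hκJ : κ ∈ J := Ideal.subset_span (Set.mem_insert _ _)
  have hBI : B ∈ I := Ideal.subset_span (Set.mem_insert_of_mem _ rfl)
  have hCJ : C ∈ J := Ideal.subset_span (Set.mem_insert_of_mem _ rfl)
  have hB0 : B ≠ 0 := by rintro rfl; exact hκ (pow_eq_zero_iff hn |>.mp (by rw [← hBC]; ring))
  have hC0 : C ≠ 0 := by rintro rfl; exact hκ (pow_eq_zero_iff hn |>.mp (by rw [← hBC]; ring))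
  -- I * J = span {κ}
  have hIJ : I * J = Ideal.span {κ} := by
    apply le_antisymm
    · rw [hI, hJ, Ideal.span_insert, Ideal.span_insert, Ideal.sup_mul, Ideal.mul_sup,
        Ideal.mul_sup, Ideal.span_singleton_mul_span_singleton,
        Ideal.span_singleton_mul_span_singleton, Ideal.span_singleton_mul_span_singleton,
        Ideal.span_singleton_mul_span_singleton]
      refine sup_le (sup_le ?_ ?_) (sup_le ?_ ?_) <;>
        rw [Ideal.span_singleton_le_span_singleton]
      · exact Dvd.intro κ rfl
      · exact Dvd.intro C rfl
      · exact Dvd.intro_left B rfl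
      · rw [hBC]; exact dvd_pow_self κ hn
    · rw [Ideal.span_singleton_le_iff_mem]
      have : κ = y * (κ * κ) + (z * (B * κ) + z * (κ * C)) := by linear_combination (-κ) * hyz
      rw [this]
      exact add_mem (Ideal.mul_mem_left _ _ (Ideal.mul_mem_mul hκI hκJ))
        (add_mem (Ideal.mul_mem_left _ _ (Ideal.mul_mem_mul hBI hκJ))
          (Ideal.mul_mem_left _ _ (Ideal.mul_mem_mul hκI hCJ)))
  -- coprimality
  have hBJ : Ideal.span {B} ⊔ J = ⊤ := by
    rw [Ideal.eq_top_iff_one]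
    refine Submodule.mem_sup.mpr ⟨z * B, ?_, y * κ + z * C, ?_, by linear_combination hyz⟩
    · exact Ideal.mul_mem_left _ _ (Ideal.subset_span rfl)
    · exact add_mem (Ideal.mul_mem_left _ _ hκJ) (Ideal.mul_mem_left _ _ hCJ)
  have hCI : Ideal.span {C} ⊔ I = ⊤ := by
    rw [Ideal.eq_top_iff_one]
    refine Submodule.mem_sup.mpr ⟨z * C, ?_, y * κ + z * B, ?_, by linear_combination hyz⟩
    · exact Ideal.mul_mem_left _ _ (Ideal.subset_span rfl)
    · exact add_mem (Ideal.mul_mem_left _ _ hκI) (Ideal.mul_mem_left _ _ hBI)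
  -- I^n * J^n = span{B} * span{C}
  have hprod : I ^ n * J ^ n = Ideal.span {B} * Ideal.span {C} := by
    rw [← mul_pow, hIJ, Ideal.span_singleton_pow, ← hBC,
      Ideal.span_singleton_mul_span_singleton]
  -- span{B} ∣ I^n
  have hJn : J ^ n ⊔ Ideal.span {B} = ⊤ := by
    have : IsCoprime (Ideal.span {B}) J := Ideal.isCoprime_iff_sup_eq.mpr hBJ
    have := (this.pow_right (n := n)).symm
    rw [Ideal.isCoprime_iff_sup_eq] at this
    exact this
  have hBdvd : Ideal.span {B} ∣ I ^ n := by
    rw [Ideal.dvd_iff_le]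
    exact cop_le (by rw [hprod]; exact Ideal.mul_le_left) hJn
  have hIn' : I ^ n ⊔ Ideal.span {C} = ⊤ := by
    have : IsCoprime (Ideal.span {C}) I := Ideal.isCoprime_iff_sup_eq.mpr hCI
    have := (this.pow_right (n := n)).symm
    rw [Ideal.isCoprime_iff_sup_eq] at this
    exact this
  have hCdvd : Ideal.span {C} ∣ J ^ n := by
    rw [Ideal.dvd_iff_le]
    exact cop_le (by rw [mul_comm, hprod]; exact Ideal.mul_le_right) hIn'
  obtain ⟨E, hE⟩ := hBdvd
  obtain ⟨F, hF⟩ := hCdvd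
  have hne : Ideal.span {B} * Ideal.span {C} ≠ 0 := by
    apply mul_ne_zero <;>
      simp only [ne_eq, Ideal.zero_eq_bot, Ideal.span_singleton_eq_bot]
    exacts [hB0, hC0]
  have hEF : E * F = 1 := by
    have h2 : Ideal.span {B} * Ideal.span {C} * (E * F) = I ^ n * J ^ n := by
      rw [hE, hF]; ring
    have h3 : Ideal.span {B} * Ideal.span {C} * (E * F)
        = Ideal.span {B} * Ideal.span {C} * 1 := by
      rw [h2, hprod, mul_one]
    exact mul_left_cancel₀ hne h3
  have hE1 : E = 1 := Ideal.isUnit_iff.mp (IsUnit.of_mul_eq_one F hEF) |>.trans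
    Ideal.one_eq_top.symm
  rw [hE, hE1, mul_one]

set_option maxHeartbeats 1000000 in
theorem stmt_18 (n k x : ℕ) (hn : 2 < n) (hk : 1 < k) (hx : 0 < x) (hxodd : Odd x)
    (hgcd : Nat.gcd k x = 1) (hlt : (x : ℤ) ^ 2 < 4 * (k : ℤ) ^ n)
    (d a : ℤ) (ha : 0 < a) (hd : Squarefree d) (hd3 : d < -3)
    (hda : (x : ℤ) ^ 2 - 4 * (k : ℤ) ^ n = a ^ 2 * d)
    (hbound : ((k : ℚ)) ^ n < ((1 : ℚ) - (d : ℚ)) ^ 2 / 16)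
    (K : Type) [Field K] [NumberField K] (α : K) (hα : α ^ 2 = (d : K))
    (hrank : Module.finrank ℚ K = 2) :
    (n : ℕ) ∣ NumberField.classNumber K := by
  classical
  have hd0 : d < 0 := by omega
  have hdq : (d : ℚ) < 0 := by exact_mod_cast hd0
  have hn0 : n ≠ 0 := by omega
  have hdaQ : (x:ℚ)^2 - 4*(k:ℚ)^n = (a:ℚ)^2 * (d:ℚ) := by exact_mod_cast hda
  have hdaK : ((x:K))^2 - 4*((k:K))^n = ((a:ℤ):K)^2 * ((d:ℤ):K) := by
    have := congrArg (fun i : ℤ => (i : K)) hda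
    push_cast at this ⊢
    exact this
  -- d ≡ 1 mod 4
  have hd4 : (4:ℤ) ∣ d - 1 := by
    have hz : ((x:ℤ) : ZMod 4)^2 = ((a:ℤ) : ZMod 4)^2 * ((d:ℤ) : ZMod 4) := by
      have := congrArg (fun i : ℤ => (i : ZMod 4)) hda
      push_cast at this
      rwa [show ((4:ZMod 4)) = 0 by decide, zero_mul, sub_zero] at this
    obtain ⟨m, hm⟩ := hxodd
    have hx4 : ((x:ℤ) : ZMod 4)^2 = 1 := by
      have : (x : ZMod 4) = 2 * (m : ZMod 4) + 1 := by exact_mod_cast congrArg (fun i : ℕ => (i : ZMod 4)) hm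
      push_cast
      rw [this]
      have : ∀ mm : ZMod 4, (2 * mm + 1)^2 = 1 := by decide
      exact this _
    have hcd : ((d:ℤ) : ZMod 4) = 1 := by
      have hkey : ∀ A D : ZMod 4, A^2 * D = 1 → D = 1 := by decide
      exact hkey _ _ (by rw [← hz, hx4])
    have : ((d - 1 : ℤ) : ZMod 4) = 0 := by push_cast; rw [hcd]; ring
    exact (ZMod.intCast_zmod_eq_zero_iff_dvd _ 4).mp this
  -- the algebraic integer β
  set p₀ : ℚ := (x:ℚ)/2 with hp₀
  set q₀ : ℚ := (a:ℚ)/2 with hq₀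
  set βK : K := ((p₀ : ℚ):K) + ((q₀ : ℚ):K) * α with hβK
  have hcastp : ((p₀ : ℚ):K) = (x:K)/2 := by rw [hp₀]; push_cast; ring
  have hcastq : ((q₀ : ℚ):K) = ((a:ℤ):K)/2 := by rw [hq₀]; push_cast; ring
  have hβint : IsIntegral ℤ βK := by
    refine ⟨Polynomial.X^2 + (Polynomial.C (-(x:ℤ)) * Polynomial.X
      + Polynomial.C ((k:ℤ)^n)), ?_, ?_⟩
    · apply Polynomial.monic_X_pow_add
      apply lt_of_le_of_lt (Polynomial.degree_add_le _ _)
      simp only [sup_lt_iff]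
      constructor
      · apply lt_of_le_of_lt (Polynomial.degree_mul_le _ _)
        have h1 := Polynomial.degree_C_le (a := -(x:ℤ))
        have h2 := Polynomial.degree_X_le (R := ℤ)
        calc Polynomial.degree (Polynomial.C (-(x:ℤ))) + Polynomial.degree (Polynomial.X : Polynomial ℤ)
            ≤ 0 + 1 := add_le_add h1 h2
        _ < 2 := by decide
      · exact lt_of_le_of_lt Polynomial.degree_C_le (by decide)
    · simp only [Polynomial.eval₂_add, Polynomial.eval₂_mul, Polynomial.eval₂_pow,
        Polynomial.eval₂_X, Polynomial.eval₂_C]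
      rw [show algebraMap ℤ K = Int.castRingHom K from rfl]
      simp only [Int.coe_castRingHom]
      push_cast
      rw [hβK, hcastp, hcastq]
      push_cast
      linear_combination (((a:ℤ):K)^2/4) * hα - (1/4) * hdaK
  set B : NumberField.RingOfIntegers K := ⟨βK, hβint⟩ with hB
  have hcoeB : algebraMap (NumberField.RingOfIntegers K) K B = βK := rfl
  set C : NumberField.RingOfIntegers K := (x : NumberField.RingOfIntegers K) - B with hC
  have hBC : B * C = (k : NumberField.RingOfIntegers K) ^ n := by
    apply NumberField.RingOfIntegers.coe_injective
    rw [map_mul, map_pow, map_natCast, hC, map_sub, map_natCast, hcoeB, hβK,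
      hcastp, hcastq]
    push_cast
    linear_combination (-(((a:ℤ):K)^2)/4) * hα + (1/4) * hdaK
  obtain ⟨y', z', hyz'⟩ : IsCoprime ((k:ℕ):ℤ) ((x:ℕ):ℤ) := by
    rw [Int.isCoprime_iff_gcd_eq_one, Int.gcd_natCast_natCast]
    exact hgcd
  have hyz : (y' : NumberField.RingOfIntegers K) * (k : NumberField.RingOfIntegers K)
      + (z' : NumberField.RingOfIntegers K) * (B + C) = 1 := by
    have h2 : B + C = ((x:ℕ) : NumberField.RingOfIntegers K) := by rw [hC]; ring
    rw [h2]
    have := congrArg (fun i : ℤ => (i : NumberField.RingOfIntegers K)) hyz'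
    push_cast at this
    exact this
  have hκ : (k : NumberField.RingOfIntegers K) ≠ 0 := by
    intro h0
    have := congrArg (algebraMap (NumberField.RingOfIntegers K) K) h0
    rw [map_natCast, map_zero] at this
    exact (Nat.cast_ne_zero (R := K)).mpr (by omega) this
  set I : Ideal (NumberField.RingOfIntegers K) :=
    Ideal.span {(k : NumberField.RingOfIntegers K), B} with hI
  have hIn : I ^ n = Ideal.span {B} :=
    span_pow_eq _ B C n hn0 hBC hκ _ _ hyz
  have hInz : I ∈ nonZeroDivisors (Ideal (NumberField.RingOfIntegers K)) := by
    rw [mem_nonZeroDivisors_iff_ne_zero]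
    intro h0
    rw [Ideal.zero_eq_bot] at h0
    have hκI : (k : NumberField.RingOfIntegers K) ∈ I :=
      Ideal.subset_span (Set.mem_insert _ _)
    rw [h0] at hκI
    exact hκ (Submodule.mem_bot _ |>.mp hκI)
  set g := ClassGroup.mk0 ⟨I, hInz⟩ with hg
  have gpow : ∀ m : ℕ, g ^ m = ClassGroup.mk0 ⟨I ^ m, pow_mem hInz m⟩ := by
    intro m
    rw [hg, ← map_pow]
    congr 1
  have hgn : g ^ n = 1 := by
    rw [gpow n, ClassGroup.mk0_eq_one_iff]
    exact ⟨⟨B, hIn⟩⟩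
  set e := orderOf g with he
  have he_dvd : e ∣ n := orderOf_dvd_of_pow_eq_one hgn
  have he_pos : 0 < e := by
    rcases Nat.eq_zero_or_pos e with h0 | h
    · exfalso; rw [h0] at he_dvd; exact hn0 (Nat.eq_zero_of_zero_dvd he_dvd)
    · exact h
  have hIe : (I ^ e).IsPrincipal := by
    rw [← ClassGroup.mk0_eq_one_iff (pow_mem hInz e), ← gpow e]
    exact pow_orderOf_eq_one g
  by_cases hen : e = n
  · -- done
    rw [← hen]
    exact orderOf_dvd_card
  -- contradiction case
  exfalso
  obtain ⟨γ0, hγ0p⟩ := hIe.principal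
  have hγ0 : I ^ e = Ideal.span {γ0} := hγ0p
  set t := n / e with ht
  have het : e * t = n := Nat.mul_div_cancel' he_dvd
  have ht2 : 2 ≤ t := by
    rcases Nat.lt_or_ge t 2 with h | h
    · interval_cases t <;> omega
    · exact h
  have hItn : I ^ n = Ideal.span {γ0 ^ t} := by
    rw [← het, pow_mul, hγ0, Ideal.span_singleton_pow]
  have hassoc : Associated (γ0 ^ t) B := by
    rw [← Ideal.span_singleton_eq_span_singleton]
    rw [← hItn, hIn]
  obtain ⟨w, hw⟩ := hassoc
  refine endgame hα hd0 hrank hd hd3 hd4 k x a n e t hk ha hn0 (by omega) ht2 het hgcd hda hbound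
    (algebraMap (NumberField.RingOfIntegers K) K γ0)
    (algebraMap (NumberField.RingOfIntegers K) K (w : NumberField.RingOfIntegers K))
    (algebraMap (NumberField.RingOfIntegers K) K ((w⁻¹ : (NumberField.RingOfIntegers K)ˣ) : NumberField.RingOfIntegers K))
    γ0.isIntegral_coe (w : NumberField.RingOfIntegers K).isIntegral_coe
    ((w⁻¹ : (NumberField.RingOfIntegers K)ˣ) : NumberField.RingOfIntegers K).isIntegral_coe
    (by rw [← map_mul, w.mul_inv, map_one]) ?_
  show ((((x:ℚ)/2 : ℚ)):K) + ((((a:ℚ)/2 : ℚ)):K) * α = _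
  rw [← hp₀, ← hq₀, ← hβK, ← hcoeB, ← hw, map_mul, map_pow]
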